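/- Let X be a geodesic Peano continuum that is semi-locally simply connected, with basepoint x₀. On the set X̃ of homotopy-rel-endpoints classes of paths in X starting at x₀, define d([α],[β]) as the infimum of lengths of paths γ from α(1) to β(1) that are homotopic rel endpoints to α⁻¹ ∗ β. Then d is a metric on X̃. -/

import Mathlib

open Metric Set ENNReal NNReal

noncomputable section

/-- Arc length of a path in a pseudo-metric space, valued in `ℝ≥0∞`. -/
def pathLen {X : Type*} [PseudoMetricSpace X] {x y : X} (γ : Path x y) : ℝ≥0∞ :=
  eVariationOn γ Set.univ

/-- A metric space is geodesic if any two points are joined by a path whose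
length equals their distance. -/
def IsGeodesicSpace (X : Type*) [MetricSpace X] : Prop :=
  ∀ x y : X, ∃ γ : Path x y, pathLen γ = ENNReal.ofReal (dist x y)

/-- Semi-local simple connectedness: every point has a neighborhood `U` such
that every loop contained in `U` is null-homotopic in `X`. -/
def SemiLocallySimplyConnected (X : Type*) [TopologicalSpace X] : Prop :=
  ∀ x : X, ∃ U ∈ nhds x, ∀ γ : Path x x, Set.range γ ⊆ U → γ.Homotopic (Path.refl x)

/-- A group is finitely presented. -/
def Group.FinitelyPresented (G : Type*) [Group G] : Prop :=
  ∃ (n : ℕ) (rels : Set (FreeGroup (Fin n))), rels.Finite ∧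
    Nonempty (PresentedGroup rels ≃* G)

/-- The space of homotopy-rel-endpoints classes of paths starting at `x₀`. -/
def PathsFrom {X : Type*} [TopologicalSpace X] (x₀ : X) : Type _ :=
  Σ y : X, Path.Homotopic.Quotient x₀ y

/-- The length-infimum distance on `PathsFrom x₀`, valued in `ℝ≥0∞`:
the infimum of lengths of paths `γ` from `α(1)` to `β(1)` such that
`α ∗ γ` is homotopic rel endpoints to `β`. -/
def dTilde {X : Type*} [MetricSpace X] {x₀ : X} (a b : PathsFrom x₀) : ℝ≥0∞ :=
  ⨅ γ : {γ : Path a.1 b.1 // Path.Homotopic.Quotient.trans a.2 (Path.Homotopic.Quotient.mk γ) = b.2}, pathLen γ.1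

/-- The endpoint projection `X̃ → X`. -/
def endpointProj {X : Type*} [TopologicalSpace X] {x₀ : X} (a : PathsFrom x₀) : X := a.1

/-- The action of a class of a loop `β` at `x₀` on `PathsFrom x₀`, sending `[α]` to `[β ∗ α]`. -/
def loopAct {X : Type*} [TopologicalSpace X] {x₀ : X}
    (g : Path.Homotopic.Quotient x₀ x₀) (a : PathsFrom x₀) : PathsFrom x₀ :=
  ⟨a.1, Path.Homotopic.Quotient.trans g a.2⟩

/-- Uniform path connectedness. -/
def UniformlyPathConnected (X : Type*) [MetricSpace X] : Prop :=
  ∃ α : ℝ → ℝ, ∀ x y : X, x ≠ y →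
    ∃ γ : Path x y, Metric.diam (Set.range γ) ≤ α (dist x y)

/-- `π₁(X, x₀)` is uniformly generated: for some `R > 0` it is generated by
classes of loops of diameter at most `R`, conjugated to the basepoint by arbitrary paths. -/
def UniformlyGeneratedPi1 (X : Type*) [MetricSpace X] (x₀ : X) : Prop :=
  ∃ R : ℝ, 0 < R ∧ Subgroup.closure
    {g : FundamentalGroup X x₀ | ∃ (y : X) (p : Path x₀ y) (γ : Path y y),
      Metric.diam (Set.range γ) ≤ R ∧
      g = FundamentalGroup.fromPath (X := TopCat.of X) ⟦(p.trans γ).trans p.symm⟧} = ⊤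

/-- A list of points of `X` is an `r`-chain: consecutive points are at distance at most `r`. -/
def IsChain' {X : Type*} [MetricSpace X] (r : ℝ) : List X → Prop :=
  List.Chain' (fun x y => dist x y ≤ r)

/-- An elementary move at scale `R` between based chains: insertion of one interior
point, with both chains being `R`-chains. -/
def ChainMove {X : Type*} [MetricSpace X] (R : ℝ) (l₁ l₂ : List X) : Prop :=
  ∃ (p q : List X) (x : X), p ≠ [] ∧ q ≠ [] ∧
    l₁ = p ++ q ∧ l₂ = p ++ x :: q ∧ IsChain' R l₁ ∧ IsChain' R l₂

/-- A based `r`-loop is `R`-null-homotopic: it can be reduced to the trivial loop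
by elementary moves at scale `R`. -/
def ChainNull {X : Type*} [MetricSpace X] (R : ℝ) (x₀ : X) (l : List X) : Prop :=
  Relation.ReflTransGen (fun a b => ChainMove R a b ∨ ChainMove R b a) l [x₀, x₀]

/-- Coarse 1-connectedness of a metric space, via chains (edge-paths in Rips
complexes): `X` is `t`-chain connected for some `t > 0`, and every `r`-loop can
be filled at some uniformly larger scale `R`. -/
def CoarselySimplyConnected (X : Type*) [MetricSpace X] : Prop :=
  (∃ t : ℝ, 0 < t ∧ ∀ x y : X, ∃ l : List X, IsChain' t l ∧
      l.head? = some x ∧ l.getLast? = some y) ∧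
  ∀ r : ℝ, 0 < r → ∃ R : ℝ, r ≤ R ∧ ∀ (x₀ : X) (l : List X),
    IsChain' r l → l.head? = some x₀ → l.getLast? = some x₀ → ChainNull R x₀ l

end

noncomputable section AuxStmt4

open unitInterval

attribute [local instance] Path.Homotopic.setoid

variable {X : Type*}

section QuotAlg
variable [TopologicalSpace X]

lemma qcomp_assoc {w x y z : X} (P : Path.Homotopic.Quotient w x)
    (Q : Path.Homotopic.Quotient x y) (R : Path.Homotopic.Quotient y z) :
    (P.trans Q).trans R = P.trans (Q.trans R) := by
  induction P using Quotient.inductionOn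
  induction Q using Quotient.inductionOn
  induction R using Quotient.inductionOn
  exact Quotient.sound (s := Path.Homotopic.setoid _ _) ⟨Path.Homotopy.transAssoc _ _ _⟩

lemma qcomp_refl {x y : X} (P : Path.Homotopic.Quotient x y) :
    P.trans ⟦Path.refl y⟧ = P := by
  induction P using Quotient.inductionOn
  exact Quotient.sound (s := Path.Homotopic.setoid _ _) ⟨Path.Homotopy.transRefl _⟩

lemma qrefl_comp {x y : X} (P : Path.Homotopic.Quotient x y) :
    Path.Homotopic.Quotient.trans ⟦Path.refl x⟧ P = P := by
  induction P using Quotient.inductionOn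
  exact Quotient.sound (s := Path.Homotopic.setoid _ _) ⟨Path.Homotopy.reflTrans _⟩

lemma qtrans_symm {x y : X} (p : Path x y) :
    (⟦p.trans p.symm⟧ : Path.Homotopic.Quotient x x) = ⟦Path.refl x⟧ :=
  Quotient.sound ⟨(Path.Homotopy.reflTransSymm p).symm⟩

lemma qsymm_trans {x y : X} (p : Path x y) :
    (⟦p.symm.trans p⟧ : Path.Homotopic.Quotient y y) = ⟦Path.refl y⟧ :=
  Quotient.sound ⟨(Path.Homotopy.reflSymmTrans p).symm⟩

lemma q_cancel {x y : X} {α g : Path x y}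
    (h : (α.trans g.symm).Homotopic (Path.refl x)) :
    (⟦α⟧ : Path.Homotopic.Quotient x y) = ⟦g⟧ := by
  have h1 : (⟦α.trans g.symm⟧ : Path.Homotopic.Quotient x x) = ⟦Path.refl x⟧ :=
    Quotient.sound h
  calc Path.Homotopic.Quotient.mk α
      = Path.Homotopic.Quotient.trans ⟦α⟧ ⟦Path.refl y⟧ := (qcomp_refl _).symm
    _ = Path.Homotopic.Quotient.trans ⟦α⟧ ⟦g.symm.trans g⟧ := by rw [qsymm_trans g]
    _ = Path.Homotopic.Quotient.trans ⟦α⟧ (Path.Homotopic.Quotient.trans ⟦g.symm⟧ ⟦g⟧) := rfl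
    _ = (Path.Homotopic.Quotient.trans ⟦α⟧ ⟦g.symm⟧).trans ⟦g⟧ := (qcomp_assoc _ _ _).symm
    _ = Path.Homotopic.Quotient.trans ⟦Path.refl x⟧ ⟦g⟧ := by
        show Path.Homotopic.Quotient.trans ⟦α.trans g.symm⟧ ⟦g⟧ = _
        rw [h1]
    _ = Path.Homotopic.Quotient.mk g := qrefl_comp _

lemma q_loop_conj {x y : X} {p : Path x y} {γ : Path y y}
    (h : ((p.trans γ).trans p.symm).Homotopic (Path.refl x)) :
    γ.Homotopic (Path.refl y) := by
  have h1 : (⟦p.trans γ⟧ : Path.Homotopic.Quotient x y) = ⟦p⟧ := q_cancel h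
  have h2 : (⟦γ⟧ : Path.Homotopic.Quotient y y) = ⟦Path.refl y⟧ := by
    calc Path.Homotopic.Quotient.mk γ
        = Path.Homotopic.Quotient.trans ⟦Path.refl y⟧ ⟦γ⟧ := (qrefl_comp _).symm
      _ = Path.Homotopic.Quotient.trans ⟦p.symm.trans p⟧ ⟦γ⟧ := by rw [qsymm_trans p]
      _ = (Path.Homotopic.Quotient.trans ⟦p.symm⟧ ⟦p⟧).trans ⟦γ⟧ := rfl
      _ = Path.Homotopic.Quotient.trans ⟦p.symm⟧ (Path.Homotopic.Quotient.trans ⟦p⟧ ⟦γ⟧) :=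
          qcomp_assoc _ _ _
      _ = Path.Homotopic.Quotient.trans ⟦p.symm⟧ ⟦p⟧ := by
          show Path.Homotopic.Quotient.trans ⟦p.symm⟧ ⟦p.trans γ⟧ = _
          rw [h1]
      _ = Path.Homotopic.Quotient.mk (Path.refl y) := qsymm_trans p
  exact Quotient.exact h2

end QuotAlg

/-- `t ↦ t/2` on the unit interval. -/
def iHalfL : I → I := fun t => ⟨(t : ℝ) / 2, by
  constructor
  · linarith [t.2.1]
  · linarith [t.2.2]⟩

/-- `t ↦ (t+1)/2` on the unit interval. -/
def iHalfR : I → I := fun t => ⟨((t : ℝ) + 1) / 2, by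
  constructor
  · linarith [t.2.1]
  · linarith [t.2.2]⟩

/-- The midpoint of the unit interval. -/
def iMid : I := ⟨1 / 2, by constructor <;> norm_num⟩

lemma continuous_iHalfL : Continuous iHalfL :=
  Continuous.subtype_mk (continuous_subtype_val.div_const 2) _

lemma continuous_iHalfR : Continuous iHalfR :=
  Continuous.subtype_mk ((continuous_subtype_val.add continuous_const).div_const 2) _

lemma monotone_iHalfL : Monotone iHalfL := fun s t h => by
  simp only [iHalfL, Subtype.mk_le_mk]
  have : (s : ℝ) ≤ t := h
  show (s : ℝ) / 2 ≤ (t : ℝ) / 2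
  linarith

lemma monotone_iHalfR : Monotone iHalfR := fun s t h => by
  simp only [iHalfR, Subtype.mk_le_mk]
  have : (s : ℝ) ≤ t := h
  show ((s : ℝ) + 1) / 2 ≤ ((t : ℝ) + 1) / 2
  linarith

lemma iHalfL_image_univ : iHalfL '' Set.univ = Set.Icc 0 iMid := by
  ext u
  simp only [Set.image_univ, Set.mem_range, Set.mem_Icc]
  constructor
  · rintro ⟨t, rfl⟩
    constructor
    · show (0 : ℝ) ≤ (t : ℝ) / 2
      linarith [t.2.1]
    · show ((t : ℝ) / 2 : ℝ) ≤ 1 / 2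
      linarith [t.2.2]
  · rintro ⟨h0, h1⟩
    have h0' : (0 : ℝ) ≤ (u : ℝ) := h0
    have h1' : (u : ℝ) ≤ 1 / 2 := h1
    exact ⟨⟨2 * (u : ℝ), by constructor <;> linarith⟩, by
      simp only [iHalfL]; apply Subtype.ext; show (2 * (u : ℝ)) / 2 = u; ring⟩

lemma iHalfR_image_univ : iHalfR '' Set.univ = Set.Icc iMid 1 := by
  ext u
  simp only [Set.image_univ, Set.mem_range, Set.mem_Icc]
  constructor
  · rintro ⟨t, rfl⟩
    constructor
    · show ((1 : ℝ) / 2 : ℝ) ≤ ((t : ℝ) + 1) / 2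
      linarith [t.2.1]
    · show (((t : ℝ) + 1) / 2 : ℝ) ≤ 1
      linarith [t.2.2]
  · rintro ⟨h0, h1⟩
    have h0' : (1 : ℝ) / 2 ≤ (u : ℝ) := h0
    have h1' : (u : ℝ) ≤ 1 := h1
    exact ⟨⟨2 * (u : ℝ) - 1, by constructor <;> linarith⟩, by
      simp only [iHalfR]; apply Subtype.ext; show (2 * (u : ℝ) - 1 + 1) / 2 = u; ring⟩

section Halves
variable [TopologicalSpace X]

/-- First half of a path. -/
def firstHalf {x y : X} (α : Path x y) : Path x (α iMid) where
  toFun t := α (iHalfL t)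
  continuous_toFun := α.continuous.comp continuous_iHalfL
  source' := by
    show α (iHalfL 0) = x
    have : iHalfL 0 = 0 := by apply Subtype.ext; show ((0 : ℝ)) / 2 = 0; norm_num
    rw [this]; exact α.source
  target' := by
    show α (iHalfL 1) = α iMid
    have : iHalfL 1 = iMid := by apply Subtype.ext; rfl
    rw [this]

/-- Second half of a path. -/
def secondHalf {x y : X} (α : Path x y) : Path (α iMid) y where
  toFun t := α (iHalfR t)
  continuous_toFun := α.continuous.comp continuous_iHalfR
  source' := by
    show α (iHalfR 0) = α iMid
    have : iHalfR 0 = iMid := by apply Subtype.ext; show ((0 : ℝ) + 1) / 2 = 1 / 2; norm_num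
    rw [this]
  target' := by
    show α (iHalfR 1) = y
    have : iHalfR 1 = 1 := by apply Subtype.ext; show ((1 : ℝ) + 1) / 2 = 1; norm_num
    rw [this]; exact α.target

lemma halves_trans {x y : X} (α : Path x y) :
    (firstHalf α).trans (secondHalf α) = α := by
  ext t
  rw [Path.trans_apply]
  split_ifs with h
  · show α _ = α t
    congr 1
    apply Subtype.ext
    show (2 * (t : ℝ)) / 2 = t
    ring
  · show α _ = α t
    congr 1
    apply Subtype.ext
    show ((2 * (t : ℝ) - 1) + 1) / 2 = t
    ring

end Halves

section Len
variable [MetricSpace X]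

lemma pathLen_refl (x : X) : pathLen (Path.refl x) = 0 := by
  apply eVariationOn.constant_on
  rintro u ⟨t, -, rfl⟩ v ⟨s, -, rfl⟩
  rfl

lemma edist_le_pathLen {x y : X} (γ : Path x y) (s t : I) :
    edist (γ s) (γ t) ≤ pathLen γ :=
  eVariationOn.edist_le γ (Set.mem_univ s) (Set.mem_univ t)

lemma edist_endpoints_le {x y : X} (γ : Path x y) : edist x y ≤ pathLen γ := by
  have := edist_le_pathLen γ 0 1
  rwa [γ.source, γ.target] at this

lemma diam_range_le_pathLen {x y : X} (γ : Path x y) :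
    EMetric.diam (Set.range γ) ≤ pathLen γ := by
  apply EMetric.diam_le
  rintro u ⟨s, rfl⟩ v ⟨t, rfl⟩
  exact edist_le_pathLen γ s t

lemma pathLen_symm {x y : X} (γ : Path x y) : pathLen γ.symm = pathLen γ := by
  have hanti : AntitoneOn (unitInterval.symm) (Set.univ : Set I) := by
    intro s _ t _ h
    show σ t ≤ σ s
    exact unitInterval.symm_le_symm.mpr h
  have h1 : (γ.symm : I → X) = (γ : I → X) ∘ unitInterval.symm := rfl
  have h2 := eVariationOn.comp_eq_of_antitoneOn (γ : I → X) unitInterval.symm hanti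
  have h3 : unitInterval.symm '' Set.univ = Set.univ := by
    rw [Set.image_univ]
    exact (Function.Surjective.range_eq fun t => ⟨σ t, unitInterval.symm_symm t⟩)
  show eVariationOn (γ.symm : I → X) Set.univ = eVariationOn (γ : I → X) Set.univ
  rw [h1, h2, h3]

lemma univ_eq_Icc_I : (Set.univ : Set I) = Set.Icc 0 1 := by
  ext t
  simp only [Set.mem_univ, Set.mem_Icc, true_iff]
  exact ⟨t.2.1, t.2.2⟩

lemma pathLen_trans {x y z : X} (γ₁ : Path x y) (γ₂ : Path y z) :
    pathLen (γ₁.trans γ₂) = pathLen γ₁ + pathLen γ₂ := by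
  have hL : ((γ₁.trans γ₂ : I → X) ∘ iHalfL) = (γ₁ : I → X) := by
    funext t
    show (γ₁.trans γ₂) (iHalfL t) = γ₁ t
    rw [Path.trans_apply]
    have ht : ((iHalfL t : I) : ℝ) ≤ 1 / 2 := by
      show (t : ℝ) / 2 ≤ 1 / 2
      linarith [t.2.2]
    rw [dif_pos ht]
    congr 1
    apply Subtype.ext
    show 2 * ((t : ℝ) / 2) = t
    ring
  have hR : ((γ₁.trans γ₂ : I → X) ∘ iHalfR) = (γ₂ : I → X) := by
    funext t
    show (γ₁.trans γ₂) (iHalfR t) = γ₂ t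
    rw [Path.trans_apply]
    split_ifs with h
    · have h' : ((t : ℝ) + 1) / 2 ≤ 1 / 2 := h
      have ht0 : (t : ℝ) = 0 := le_antisymm (by linarith) t.2.1
      have h2 : t = 0 := Subtype.ext ht0
      subst h2
      rw [γ₂.source]
      convert γ₁.target using 2
      apply Subtype.ext
      show 2 * (((0 : ℝ) + 1) / 2) = 1
      norm_num
    · congr 1
      apply Subtype.ext
      show 2 * (((t : ℝ) + 1) / 2) - 1 = t
      ring
  have k1 : pathLen γ₁ = eVariationOn (γ₁.trans γ₂) (Set.univ ∩ Set.Icc 0 iMid) := by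
    show eVariationOn (γ₁ : I → X) Set.univ = _
    rw [← hL, eVariationOn.comp_eq_of_monotoneOn _ iHalfL (monotone_iHalfL.monotoneOn _),
      iHalfL_image_univ, Set.univ_inter]
  have k2 : pathLen γ₂ = eVariationOn (γ₁.trans γ₂) (Set.univ ∩ Set.Icc iMid 1) := by
    show eVariationOn (γ₂ : I → X) Set.univ = _
    rw [← hR, eVariationOn.comp_eq_of_monotoneOn _ iHalfR (monotone_iHalfR.monotoneOn _),
      iHalfR_image_univ, Set.univ_inter]
  have hmid0 : (0 : I) ≤ iMid := by show (0 : ℝ) ≤ 1 / 2; norm_num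
  have hmid1 : iMid ≤ (1 : I) := by show (1 : ℝ) / 2 ≤ 1; norm_num
  have := eVariationOn.Icc_add_Icc (γ₁.trans γ₂ : I → X) (s := Set.univ) hmid0 hmid1
    (Set.mem_univ iMid)
  rw [k1, k2, this, Set.univ_inter, ← univ_eq_Icc_I]
  rfl

end Len

section Rect
variable [MetricSpace X]

lemma abs_sub_le_one' (s t : I) : |(s : ℝ) - (t : ℝ)| ≤ 1 := by
  rw [abs_sub_le_iff]
  constructor <;> linarith [s.2.1, s.2.2, t.2.1, t.2.2]

attribute [local instance] Path.Homotopic.setoid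

lemma rectify (hg : IsGeodesicSpace X) (e : ℝ≥0∞)
    (hnull : ∀ (y : X) (γ : Path y y), EMetric.diam (Set.range (γ : I → X)) ≤ 2 * e →
      γ.Homotopic (Path.refl y)) :
    ∀ (k : ℕ) (c : ℝ) (x y : X) (α : Path x y),
      (∀ s t : I, |(s : ℝ) - (t : ℝ)| ≤ c → edist (α s) (α t) ≤ e) → (1 : ℝ) ≤ 2 ^ k * c →
      ∃ γ : Path x y, (⟦γ⟧ : Path.Homotopic.Quotient x y) = ⟦α⟧ ∧ pathLen γ ≠ ⊤ := by
  intro k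
  induction k with
  | zero =>
    intro c x y α hmod hc
    rw [pow_zero, one_mul] at hc
    obtain ⟨g, hgl⟩ := hg x y
    have hα : ∀ s t : I, edist (α s) (α t) ≤ e := fun s t =>
      hmod s t ((abs_sub_le_one' s t).trans hc)
    have hge : pathLen g ≤ e := by
      rw [hgl, ← edist_dist]
      calc edist x y = edist (α 0) (α 1) := by rw [α.source, α.target]
        _ ≤ e := hα 0 1
    have hgp : ∀ s t : I, edist (g s) (g t) ≤ e := fun s t =>
      (edist_le_pathLen g s t).trans hge
    have cross : ∀ s t : I, edist (α s) (g t) ≤ 2 * e := fun s t => by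
      calc edist (α s) (g t) ≤ edist (α s) (α 0) + edist (g 0) (g t) := by
            rw [α.source, g.source]; exact edist_triangle _ _ _
        _ ≤ e + e := add_le_add (hα s 0) (hgp 0 t)
        _ = 2 * e := (two_mul e).symm
    have hbnd : ∀ u ∈ Set.range (α : I → X) ∪ Set.range (g : I → X),
        ∀ v ∈ Set.range (α : I → X) ∪ Set.range (g : I → X), edist u v ≤ 2 * e := by
      rintro u (⟨s, rfl⟩ | ⟨s, rfl⟩) v (⟨t, rfl⟩ | ⟨t, rfl⟩)
      · exact (hα s t).trans (by rw [two_mul]; exact le_add_self)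
      · exact cross s t
      · rw [edist_comm]; exact cross t s
      · exact (hgp s t).trans (by rw [two_mul]; exact le_add_self)
    have hdiam : EMetric.diam (Set.range ((α.trans g.symm) : I → X)) ≤ 2 * e := by
      rw [Path.trans_range, Path.symm_range]
      exact EMetric.diam_le hbnd
    have hhom := hnull x (α.trans g.symm) hdiam
    exact ⟨g, (q_cancel hhom).symm, by rw [hgl]; exact ENNReal.ofReal_ne_top⟩
  | succ k ih =>
    intro c x y α hmod hc
    have hmodL : ∀ s t : I, |(s : ℝ) - (t : ℝ)| ≤ 2 * c →
        edist ((firstHalf α) s) ((firstHalf α) t) ≤ e := by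
      intro s t h
      show edist (α (iHalfL s)) (α (iHalfL t)) ≤ e
      apply hmod
      show |(s : ℝ) / 2 - (t : ℝ) / 2| ≤ c
      rw [div_sub_div_same, abs_div, abs_two]
      linarith
    have hmodR : ∀ s t : I, |(s : ℝ) - (t : ℝ)| ≤ 2 * c →
        edist ((secondHalf α) s) ((secondHalf α) t) ≤ e := by
      intro s t h
      show edist (α (iHalfR s)) (α (iHalfR t)) ≤ e
      apply hmod
      show |((s : ℝ) + 1) / 2 - ((t : ℝ) + 1) / 2| ≤ c
      have : ((s : ℝ) + 1) / 2 - ((t : ℝ) + 1) / 2 = ((s : ℝ) - (t : ℝ)) / 2 := by ring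
      rw [this, abs_div, abs_two]
      linarith
    have hbound : (1 : ℝ) ≤ 2 ^ k * (2 * c) := by
      have h2 : (2 : ℝ) ^ k * (2 * c) = 2 ^ (k + 1) * c := by rw [pow_succ]; ring
      rw [h2]; exact hc
    obtain ⟨γ₁, hq1, hf1⟩ := ih (2 * c) x (α iMid) (firstHalf α) hmodL hbound
    obtain ⟨γ₂, hq2, hf2⟩ := ih (2 * c) (α iMid) y (secondHalf α) hmodR hbound
    refine ⟨γ₁.trans γ₂, ?_, ?_⟩
    · calc Path.Homotopic.Quotient.mk (γ₁.trans γ₂)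
          = Path.Homotopic.Quotient.trans ⟦γ₁⟧ ⟦γ₂⟧ := rfl
        _ = Path.Homotopic.Quotient.trans ⟦firstHalf α⟧ ⟦secondHalf α⟧ := by rw [hq1, hq2]
        _ = Path.Homotopic.Quotient.mk ((firstHalf α).trans (secondHalf α)) := rfl
        _ = Path.Homotopic.Quotient.mk α := by rw [halves_trans]
    · rw [pathLen_trans]
      exact ENNReal.add_ne_top.mpr ⟨hf1, hf2⟩

lemma scale [CompactSpace X] [Nonempty X] (hg : IsGeodesicSpace X)
    (hs : SemiLocallySimplyConnected X) :
    ∃ ε : ℝ, 0 < ε ∧ ∀ (y : X) (γ : Path y y),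
      EMetric.diam (Set.range (γ : I → X)) ≤ ENNReal.ofReal ε → γ.Homotopic (Path.refl y) := by
  choose U hU hloop using hs
  choose r hr hball using fun x => Metric.mem_nhds_iff.mp (hU x)
  obtain ⟨sf, hsf⟩ := isCompact_univ.elim_finite_subcover (fun i : X => Metric.ball i (r i / 4))
    (fun i => Metric.isOpen_ball)
    (fun x _ => Set.mem_iUnion.mpr ⟨x, Metric.mem_ball_self (by have := hr x; positivity)⟩)
  have hsne : sf.Nonempty := by
    obtain ⟨x⟩ := ‹Nonempty X›
    obtain ⟨i, hi, -⟩ := Set.mem_iUnion₂.mp (hsf (Set.mem_univ x))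
    exact ⟨i, hi⟩
  set ε := sf.inf' hsne (fun i => r i / 4) with hεdef
  have hεpos : 0 < ε := by
    apply (Finset.lt_inf'_iff _).mpr
    intro i _
    have := hr i
    positivity
  refine ⟨ε, hεpos, ?_⟩
  intro y γ hdiam
  obtain ⟨i, hi, hyi⟩ := Set.mem_iUnion₂.mp (hsf (Set.mem_univ y))
  obtain ⟨p, hp⟩ := hg i y
  have hεle : ε ≤ r i / 4 := Finset.inf'_le _ hi
  have hy4 : dist i y < r i / 4 := by
    rw [dist_comm]
    exact Metric.mem_ball.mp hyi
  have hpz : ∀ t : I, dist i (p t) < r i := by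
    intro t
    have h1 : edist i (p t) ≤ ENNReal.ofReal (dist i y) := by
      rw [← hp]
      have := edist_le_pathLen p 0 t
      rwa [p.source] at this
    rw [edist_dist] at h1
    have h2 : dist i (p t) ≤ dist i y :=
      (ENNReal.ofReal_le_ofReal_iff dist_nonneg).mp h1
    have := hr i
    linarith
  have hγz : ∀ t : I, dist i (γ t) < r i := by
    intro t
    have h1 : edist y (γ t) ≤ ENNReal.ofReal ε := by
      refine le_trans ?_ hdiam
      have : y ∈ Set.range (γ : I → X) := ⟨0, γ.source⟩
      exact EMetric.edist_le_diam_of_mem this ⟨t, rfl⟩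
    rw [edist_dist] at h1
    have h2 : dist y (γ t) ≤ ε := (ENNReal.ofReal_le_ofReal_iff hεpos.le).mp h1
    have h3 : dist i (γ t) ≤ dist i y + dist y (γ t) := dist_triangle _ _ _
    have := hr i
    linarith
  have hrange : Set.range (((p.trans γ).trans p.symm) : I → X) ⊆ U i := by
    rw [Path.trans_range, Path.trans_range, Path.symm_range]
    intro z hz
    apply hball i
    rcases hz with (⟨t, rfl⟩ | ⟨t, rfl⟩) | ⟨t, rfl⟩
    · exact Metric.mem_ball'.mpr (hpz t)
    · exact Metric.mem_ball'.mpr (hγz t)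
    · exact Metric.mem_ball'.mpr (hpz t)
  exact q_loop_conj (hloop i _ hrange)

lemma exists_rectified [CompactSpace X] [Nonempty X] (hg : IsGeodesicSpace X)
    (hs : SemiLocallySimplyConnected X) (x y : X) (α : Path x y) :
    ∃ γ : Path x y, (⟦γ⟧ : Path.Homotopic.Quotient x y) = ⟦α⟧ ∧ pathLen γ ≠ ⊤ := by
  obtain ⟨ε, hε, hnull⟩ := scale hg hs
  set e : ℝ≥0∞ := ENNReal.ofReal ε / 2 with he
  have h2e : 2 * e = ENNReal.ofReal ε :=
    ENNReal.mul_div_cancel two_ne_zero ENNReal.ofNat_ne_top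
  have hnull' : ∀ (y : X) (γ : Path y y),
      EMetric.diam (Set.range (γ : I → X)) ≤ 2 * e → γ.Homotopic (Path.refl y) := by
    intro y γ h
    exact hnull y γ (h.trans_eq h2e)
  have hepos : 0 < e := ENNReal.div_pos (ne_of_gt (ENNReal.ofReal_pos.mpr hε))
    ENNReal.ofNat_ne_top
  have huc : UniformContinuous (α : I → X) :=
    CompactSpace.uniformContinuous_of_continuous α.continuous
  obtain ⟨δ, hδ, hδe⟩ := EMetric.uniformContinuous_iff.mp huc e hepos
  have hmin : min δ 1 ≠ ⊤ := ne_top_of_le_ne_top ENNReal.one_ne_top (min_le_right δ 1)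
  have hminpos : 0 < min δ 1 := lt_min hδ zero_lt_one
  have htr : 0 < (min δ 1).toReal := ENNReal.toReal_pos (ne_of_gt hminpos) hmin
  set c : ℝ := (min δ 1).toReal / 2 with hcdef
  have hcpos : 0 < c := by positivity
  have hmod : ∀ s t : I, |(s : ℝ) - (t : ℝ)| ≤ c → edist (α s) (α t) ≤ e := by
    intro s t h
    have h1 : edist s t = ENNReal.ofReal |(s : ℝ) - (t : ℝ)| := by
      rw [Subtype.edist_eq, edist_dist, Real.dist_eq]
    have h2 : edist s t < δ := by
      rw [h1]
      calc ENNReal.ofReal |(s : ℝ) - (t : ℝ)| ≤ ENNReal.ofReal c :=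
            ENNReal.ofReal_le_ofReal h
        _ < min δ 1 := by
            rw [ENNReal.ofReal_lt_iff_lt_toReal hcpos.le hmin]
            rw [hcdef]
            linarith
        _ ≤ δ := min_le_left _ _
    exact (hδe h2).le
  obtain ⟨k, hk⟩ := pow_unbounded_of_one_lt (1 / c) (one_lt_two (α := ℝ))
  have hkc : (1 : ℝ) ≤ 2 ^ k * c := by
    have := (div_lt_iff₀ hcpos).mp hk
    linarith
  exact rectify hg e hnull' k c x y α hmod hkc

end Rect
end AuxStmt4

/-- the length-infimum distance on the space of homotopy classes
of paths from `x₀` is a metric. -/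
theorem stmt4 {X : Type*} [MetricSpace X] [CompactSpace X] [ConnectedSpace X]
    [LocallyConnectedSpace X] (hg : IsGeodesicSpace X)
    (hs : SemiLocallySimplyConnected X) (x₀ : X) :
    (∀ a b : PathsFrom x₀, dTilde a b ≠ ⊤) ∧
    (∀ a b : PathsFrom x₀, dTilde a b = 0 ↔ a = b) ∧
    (∀ a b : PathsFrom x₀, dTilde a b = dTilde b a) ∧
    (∀ a b c : PathsFrom x₀, dTilde a c ≤ dTilde a b + dTilde b c) := by
  have hne : Nonempty X := ⟨x₀⟩
  obtain ⟨ε, hεpos, hnull⟩ := scale hg hs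
  have wit_symm : ∀ (a b : PathsFrom x₀) (γ : Path a.1 b.1), a.2.trans ⟦γ⟧ = b.2 →
      b.2.trans ⟦γ.symm⟧ = a.2 := by
    intro a b γ h
    calc b.2.trans ⟦γ.symm⟧ = (a.2.trans ⟦γ⟧).trans ⟦γ.symm⟧ := by rw [h]
      _ = a.2.trans (Path.Homotopic.Quotient.trans ⟦γ⟧ ⟦γ.symm⟧) := qcomp_assoc _ _ _
      _ = a.2.trans ⟦γ.trans γ.symm⟧ := rfl
      _ = a.2.trans ⟦Path.refl a.1⟧ := by rw [qtrans_symm]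
      _ = a.2 := qcomp_refl _
  refine ⟨?_, ?_, ?_, ?_⟩
  · -- finiteness
    intro a b
    obtain ⟨ya, A⟩ := a
    obtain ⟨yb, B⟩ := b
    induction A using Quotient.inductionOn with
    | h p =>
    induction B using Quotient.inductionOn with
    | h q =>
    obtain ⟨γ, hq, hf⟩ := exists_rectified hg hs ya yb (p.symm.trans q)
    have hwit : (⟨ya, ⟦p⟧⟩ : PathsFrom x₀).2.trans ⟦γ⟧ = (⟨yb, ⟦q⟧⟩ : PathsFrom x₀).2 := by
      show Path.Homotopic.Quotient.trans ⟦p⟧ ⟦γ⟧ = ⟦q⟧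
      rw [hq]
      show Path.Homotopic.Quotient.trans ⟦p⟧
        (Path.Homotopic.Quotient.trans ⟦p.symm⟧ ⟦q⟧) = ⟦q⟧
      refine (qcomp_assoc _ _ _).symm.trans ?_
      show Path.Homotopic.Quotient.trans ⟦p.trans p.symm⟧ ⟦q⟧ = ⟦q⟧
      rw [qtrans_symm]
      exact qrefl_comp _
    have hle : dTilde (⟨ya, ⟦p⟧⟩ : PathsFrom x₀) ⟨yb, ⟦q⟧⟩ ≤ pathLen γ :=
      iInf_le (fun γ : {γ : Path ya yb // (⟨ya, ⟦p⟧⟩ : PathsFrom x₀).2.trans ⟦γ⟧ = (⟨yb, ⟦q⟧⟩ : PathsFrom x₀).2} => pathLen γ.1) ⟨γ, hwit⟩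
    exact ne_top_of_le_ne_top hf hle
  · -- zero iff eq
    intro a b
    constructor
    · intro h
      have h1 : edist a.1 b.1 = 0 := by
        apply le_antisymm _ zero_le
        rw [← h]
        apply le_iInf
        intro w
        calc edist a.1 b.1 = edist (w.1 0) (w.1 1) := by rw [w.1.source, w.1.target]
          _ ≤ pathLen w.1 := edist_le_pathLen w.1 0 1
      have h2 : a.1 = b.1 := by rwa [edist_eq_zero] at h1
      obtain ⟨y, A⟩ := a
      obtain ⟨y', B⟩ := b
      dsimp at h2
      subst h2
      have h3 : dTilde (⟨y, A⟩ : PathsFrom x₀) ⟨y, B⟩ < ENNReal.ofReal ε := by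
        rw [h]
        exact ENNReal.ofReal_pos.mpr hεpos
      obtain ⟨⟨γ, hw⟩, hlt⟩ := iInf_lt_iff.mp h3
      have hγnull : γ.Homotopic (Path.refl y) :=
        hnull y γ ((diam_range_le_pathLen γ).trans hlt.le)
      have hcls : (⟦γ⟧ : Path.Homotopic.Quotient y y) = ⟦Path.refl y⟧ := Quotient.sound hγnull
      have hAB : A = B := by
        calc A = A.trans ⟦Path.refl y⟧ := (qcomp_refl _).symm
          _ = A.trans ⟦γ⟧ := by rw [hcls]
          _ = B := hw
      rw [hAB]
    · rintro rfl
      apply le_antisymm _ zero_le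
      have hle : dTilde a a ≤ pathLen (Path.refl a.1) :=
        iInf_le (fun γ : {γ : Path a.1 a.1 // a.2.trans ⟦γ⟧ = a.2} => pathLen γ.1) ⟨Path.refl a.1, qcomp_refl a.2⟩
      rwa [pathLen_refl] at hle
  · -- symmetry
    intro a b
    have key : ∀ a b : PathsFrom x₀, dTilde b a ≤ dTilde a b := by
      intro a b
      apply le_iInf
      intro w
      exact iInf_le_of_le ⟨w.1.symm, wit_symm a b w.1 w.2⟩ (le_of_eq (pathLen_symm w.1))
    exact le_antisymm (key b a) (key a b)
  · -- triangle
    intro a b c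
    have key : ∀ (w1 : {γ : Path a.1 b.1 // a.2.trans ⟦γ⟧ = b.2})
        (w2 : {γ : Path b.1 c.1 // b.2.trans ⟦γ⟧ = c.2}),
        dTilde a c ≤ pathLen w1.1 + pathLen w2.1 := by
      intro w1 w2
      have hwit : a.2.trans ⟦w1.1.trans w2.1⟧ = c.2 := by
        show a.2.trans (Path.Homotopic.Quotient.trans ⟦w1.1⟧ ⟦w2.1⟧) = c.2
        refine (qcomp_assoc _ _ _).symm.trans ?_
        exact (congrArg (fun P => Path.Homotopic.Quotient.trans P ⟦w2.1⟧) w1.2).trans w2.2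
      have h : dTilde a c ≤ pathLen (w1.1.trans w2.1) :=
        iInf_le (fun γ : {γ : Path a.1 c.1 // a.2.trans ⟦γ⟧ = c.2} => pathLen γ.1)
          ⟨w1.1.trans w2.1, hwit⟩
      calc dTilde a c ≤ pathLen (w1.1.trans w2.1) := h
        _ = pathLen w1.1 + pathLen w2.1 := pathLen_trans _ _
    have e1 : dTilde a b + dTilde b c =
        ⨅ w1 : {γ : Path a.1 b.1 // a.2.trans ⟦γ⟧ = b.2}, (pathLen w1.1 + dTilde b c) :=
      ENNReal.iInf_add
    have e2 : ∀ w1 : {γ : Path a.1 b.1 // a.2.trans ⟦γ⟧ = b.2},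
        (pathLen w1.1 + dTilde b c) =
        ⨅ w2 : {γ : Path b.1 c.1 // b.2.trans ⟦γ⟧ = c.2}, (pathLen w1.1 + pathLen w2.1) :=
      fun _ => ENNReal.add_iInf
    rw [e1]
    apply le_iInf
    intro w1
    rw [e2 w1]
    apply le_iInf
    intro w2
    exact key w1 w2
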